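/- Let Ω = (a₁,b₁)×(a₂,b₂)×(a₃,b₃) ⊂ ℝ³ and let u ∈ C²(Ω̄; ℝ³) satisfy u·n = 0 on ∂Ω. Then ∫_Ω |∇u|² dx ≤ ∫_Ω |∇u + ∇ᵀu − (2/3)(div u) I|² dx, where I is the 3×3 identity matrix. -/

import Mathlib

open MeasureTheory Set

/-- The Jacobian entry `∂_j u^i` at `x`. -/
noncomputable def jac (u : (Fin 3 → ℝ) → (Fin 3 → ℝ)) (x : Fin 3 → ℝ) (i j : Fin 3) : ℝ :=
  fderiv ℝ u x (Pi.single j 1) i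

lemma algId (A : Fin 3 → Fin 3 → ℝ) :
    ∑ i : Fin 3, ∑ j : Fin 3,
      (A i j + A j i - (2/3) * (∑ k : Fin 3, A k k) * (if i = j then 1 else 0)) ^ 2
    = (∑ i : Fin 3, ∑ j : Fin 3, (A i j) ^ 2)
      + ((∑ i : Fin 3, ∑ j : Fin 3, (A i j) ^ 2) + (2/3) * (∑ k : Fin 3, A k k)^2)
      + 2 * ((∑ i : Fin 3, ∑ j : Fin 3, A i j * A j i) - (∑ k : Fin 3, A k k)^2) := by
  simp [Fin.sum_univ_three]
  ring

section calcstuff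
variable (u : (Fin 3 → ℝ) → (Fin 3 → ℝ))

/-- derivative (as CLM) of `fun x => u x j` -/
noncomputable def pd (x : Fin 3 → ℝ) (j : Fin 3) : (Fin 3 → ℝ) →L[ℝ] ℝ :=
  (ContinuousLinearMap.proj j).comp (fderiv ℝ u x)

/-- derivative (as CLM) of `fun x => fderiv ℝ u x (Pi.single j 1) k` -/
noncomputable def pd2 (x : Fin 3 → ℝ) (j k : Fin 3) : (Fin 3 → ℝ) →L[ℝ] ℝ :=
  ((ContinuousLinearMap.proj k).comp
    (ContinuousLinearMap.apply ℝ (Fin 3 → ℝ) (Pi.single j 1))).comp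
    (fderiv ℝ (fderiv ℝ u) x)

variable (hu : ContDiff ℝ 2 u)
include hu

lemma hasfd1 (x : Fin 3 → ℝ) (j : Fin 3) :
    HasFDerivAt (fun x => u x j) (pd u x j) x := by
  have := (ContinuousLinearMap.proj (R := ℝ) (φ := fun _ : Fin 3 => ℝ) j).hasFDerivAt.comp x
    ((hu.differentiable two_ne_zero x).hasFDerivAt)
  simpa [pd, Function.comp_def] using this

lemma hasfd2 (x : Fin 3 → ℝ) (j k : Fin 3) :
    HasFDerivAt (fun x => fderiv ℝ u x (Pi.single j 1) k) (pd2 u x j k) x := by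
  have hD : ContDiff ℝ 1 (fderiv ℝ u) := hu.fderiv_right (m := 1) (by norm_num)
  have := ((ContinuousLinearMap.proj (R := ℝ) (φ := fun _ : Fin 3 => ℝ) k).comp
    (ContinuousLinearMap.apply ℝ (Fin 3 → ℝ) (Pi.single j 1))).hasFDerivAt.comp x
    ((hD.differentiable one_ne_zero x).hasFDerivAt)
  simpa [pd2, Function.comp_def] using this

lemma cont_jac (i j : Fin 3) : Continuous fun x => jac u x i j := by
  have hD : Continuous (fderiv ℝ u) := (hu.fderiv_right (m := 1) (by norm_num)).continuous
  exact (continuous_apply i).comp (hD.clm_apply continuous_const)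

lemma cont_u (j : Fin 3) : Continuous fun x => u x j :=
  (continuous_apply j).comp hu.continuous

end calcstuff

section divfield
variable (u : (Fin 3 → ℝ) → (Fin 3 → ℝ))

/-- the vector field `G = (u·∇)u - (div u) u`, componentwise -/
noncomputable def gf (k : Fin 3) (x : Fin 3 → ℝ) : ℝ :=
  (∑ j : Fin 3, u x j * fderiv ℝ u x (Pi.single j 1) k)
    - (∑ j : Fin 3, fderiv ℝ u x (Pi.single j 1) j) * u x k

noncomputable def gf' (k : Fin 3) (x : Fin 3 → ℝ) : (Fin 3 → ℝ) →L[ℝ] ℝ :=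
  (∑ j : Fin 3, (u x j • pd2 u x j k + fderiv ℝ u x (Pi.single j 1) k • pd u x j))
    - ((∑ j : Fin 3, fderiv ℝ u x (Pi.single j 1) j) • pd u x k
        + u x k • ∑ j : Fin 3, pd2 u x j j)

variable (hu : ContDiff ℝ 2 u)
include hu

lemma hasfd_gf (k : Fin 3) (x : Fin 3 → ℝ) : HasFDerivAt (gf u k) (gf' u k x) x := by
  exact (HasFDerivAt.fun_sum fun j _ => (hasfd1 u hu x j).mul (hasfd2 u hu x j k)).sub
    ((HasFDerivAt.fun_sum fun j _ => hasfd2 u hu x j j).mul (hasfd1 u hu x k))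

lemma div_gf (x : Fin 3 → ℝ) :
    (∑ i : Fin 3, gf' u i x (Pi.single i 1))
      = (∑ i : Fin 3, ∑ j : Fin 3, jac u x i j * jac u x j i)
        - (∑ k : Fin 3, jac u x k k)^2 := by
  have hD : ContDiff ℝ 1 (fderiv ℝ u) := hu.fderiv_right (m := 1) (by norm_num)
  have hsymm : ∀ v w, fderiv ℝ (fderiv ℝ u) x v w = fderiv ℝ (fderiv ℝ u) x w v :=
    second_derivative_symmetric (fun y => (hu.differentiable two_ne_zero y).hasFDerivAt)
      ((hD.differentiable one_ne_zero x).hasFDerivAt)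
  have hs : ∀ (v w : Fin 3 → ℝ) (k : Fin 3),
      fderiv ℝ (fderiv ℝ u) x v w k = fderiv ℝ (fderiv ℝ u) x w v k :=
    fun v w k => congrFun (hsymm v w) k
  simp only [gf', pd, pd2, jac, ContinuousLinearMap.sub_apply, ContinuousLinearMap.add_apply,
    ContinuousLinearMap.smul_apply, ContinuousLinearMap.sum_apply, ContinuousLinearMap.comp_apply,
    ContinuousLinearMap.proj_apply, ContinuousLinearMap.apply_apply, smul_eq_mul,
    Fin.sum_univ_three]
  simp only [hs (Pi.single 1 1) (Pi.single 0 1), hs (Pi.single 2 1) (Pi.single 0 1),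
    hs (Pi.single 2 1) (Pi.single 1 1)]
  ring
end divfield

section boundary
variable (a b : Fin 3 → ℝ) (u : (Fin 3 → ℝ) → (Fin 3 → ℝ)) (hu : ContDiff ℝ 2 u)
  (hbc : ∀ i : Fin 3, ∀ x ∈ Set.univ.pi (fun j => Set.Icc (a j) (b j)),
      (x i = a i ∨ x i = b i) → u x i = 0)
include hu hbc

lemma gf_vanish (i : Fin 3) (x : Fin 3 → ℝ) (hx : x ∈ Set.Icc a b)
    (hxi : x i = a i ∨ x i = b i)
    (hint : ∀ j, j ≠ i → x j ∈ Set.Ioo (a j) (b j)) : gf u i x = 0 := by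
  have hmem : x ∈ Set.univ.pi (fun j => Set.Icc (a j) (b j)) := by
    rw [Set.pi_univ_Icc]; exact hx
  have hui : u x i = 0 := hbc i x hmem hxi
  have tang : ∀ j, j ≠ i → fderiv ℝ u x (Pi.single j 1) i = 0 := by
    intro j hj
    have h1 : HasDerivAt (fun t : ℝ => x + t • (Pi.single j 1 : Fin 3 → ℝ)) (Pi.single j 1) 0 := by
      simpa using ((hasDerivAt_id (0:ℝ)).smul_const (Pi.single j 1)).const_add x
    have h2 : HasFDerivAt u (fderiv ℝ u x) (x + (0:ℝ) • (Pi.single j 1 : Fin 3 → ℝ)) := by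
      simpa using ((hu.differentiable two_ne_zero) x).hasFDerivAt
    have h3 : HasDerivAt (fun t : ℝ => u (x + t • (Pi.single j 1 : Fin 3 → ℝ)))
        (fderiv ℝ u x (Pi.single j 1)) 0 := h2.comp_hasDerivAt 0 h1
    have h4 : HasDerivAt (fun t : ℝ => u (x + t • (Pi.single j 1 : Fin 3 → ℝ)) i)
        (fderiv ℝ u x (Pi.single j 1) i) 0 := hasDerivAt_pi.1 h3 i
    have hio := hint j hj
    have hne : ∀ᶠ t in nhds (0:ℝ), u (x + t • (Pi.single j 1 : Fin 3 → ℝ)) i = 0 := by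
      filter_upwards [Ioo_mem_nhds (show a j - x j < 0 by linarith [hio.1])
        (show (0:ℝ) < b j - x j by linarith [hio.2])] with t ht
      apply hbc i
      · intro k _
        simp only [Pi.add_apply, Pi.smul_apply, Pi.single_apply, smul_eq_mul]
        by_cases hk : k = j
        · subst hk
          simp only [eq_self_iff_true, if_true, mul_one]
          constructor <;> [linarith [ht.1]; linarith [ht.2]]
        · simp only [if_neg hk, mul_zero, add_zero]
          exact ⟨hx.1 k, hx.2 k⟩
      · have : (x + t • (Pi.single j 1 : Fin 3 → ℝ)) i = x i := by
          simp [Pi.single_apply, (Ne.symm hj)]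
        rw [this]; exact hxi
    have h5 : HasDerivAt (fun _ : ℝ => (0:ℝ)) (fderiv ℝ u x (Pi.single j 1) i) 0 :=
      h4.congr_of_eventuallyEq (by filter_upwards [hne] with t ht using ht.symm)
    have := h5.unique (hasDerivAt_const 0 0)
    simpa using this
  unfold gf
  rw [hui, mul_zero, sub_zero]
  apply Finset.sum_eq_zero
  intro j _
  rcases eq_or_ne j i with rfl | h
  · rw [hui, zero_mul]
  · rw [tang j h, mul_zero]

end boundary

section intzero
variable (a b : Fin 3 → ℝ) (hab : ∀ i, a i < b i) (u : (Fin 3 → ℝ) → (Fin 3 → ℝ))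
  (hu : ContDiff ℝ 2 u)
  (hbc : ∀ i : Fin 3, ∀ x ∈ Set.univ.pi (fun j => Set.Icc (a j) (b j)),
      (x i = a i ∨ x i = b i) → u x i = 0)
include hab hu hbc

lemma int_Q_zero :
    (∫ x in Set.univ.pi (fun i => Set.Ioo (a i) (b i)),
      ((∑ i : Fin 3, ∑ j : Fin 3, jac u x i j * jac u x j i)
        - (∑ k : Fin 3, jac u x k k)^2)) = 0 := by
  have hle : a ≤ b := fun i => (hab i).le
  have hQc : Continuous fun x =>
      (∑ i : Fin 3, ∑ j : Fin 3, jac u x i j * jac u x j i)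
        - (∑ k : Fin 3, jac u x k k)^2 :=
    ((continuous_finset_sum _ fun i _ => continuous_finset_sum _ fun j _ =>
      (cont_jac u hu i j).mul (cont_jac u hu j i)).sub
      ((continuous_finset_sum _ fun k _ => cont_jac u hu k k).pow 2))
  have hgc : ∀ k, Continuous (gf u k) := fun k =>
    (continuous_finset_sum _ fun j _ => (cont_u u hu j).mul (cont_jac u hu k j)).sub
      ((continuous_finset_sum _ fun j _ => cont_jac u hu j j).mul (cont_u u hu k))
  have hdiveq : (fun x => ∑ i : Fin 3, gf' u i x (Pi.single i 1))
      = fun x => (∑ i : Fin 3, ∑ j : Fin 3, jac u x i j * jac u x j i)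
        - (∑ k : Fin 3, jac u x k k)^2 := funext (div_gf u hu)
  have Hi : IntegrableOn (fun x => ∑ i : Fin 3, gf' u i x (Pi.single i 1)) (Set.Icc a b) := by
    rw [hdiveq]; exact hQc.continuousOn.integrableOn_compact isCompact_Icc
  have key := MeasureTheory.integral_divergence_of_hasFDerivAt_off_countable'
    (a := a) (b := b) hle (gf u) (gf' u) ∅ Set.countable_empty
    (fun i => (hgc i).continuousOn) (fun x _ i => hasfd_gf u hu i x) Hi
  have hface : ∀ (i : Fin 3) (c : ℝ), (c = a i ∨ c = b i) →
      (∫ y in Set.Icc (a ∘ i.succAbove) (b ∘ i.succAbove), gf u i (i.insertNth c y)) = 0 := by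
    intro i c hc
    rw [MeasureTheory.volume_pi,
      ← MeasureTheory.setIntegral_congr_set MeasureTheory.Measure.univ_pi_Ioo_ae_eq_Icc]
    apply MeasureTheory.setIntegral_eq_zero_of_forall_eq_zero
    intro y hy
    have hy' : ∀ j, y j ∈ Set.Ioo (a (i.succAbove j)) (b (i.succAbove j)) :=
      fun j => hy j (Set.mem_univ j)
    have hcI : c ∈ Set.Icc (a i) (b i) := by
      rcases hc with rfl | rfl
      · exact ⟨le_rfl, (hab i).le⟩
      · exact ⟨(hab i).le, le_rfl⟩
    have hyI : y ∈ Set.Icc (a ∘ i.succAbove) (b ∘ i.succAbove) :=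
      ⟨fun j => (hy' j).1.le, fun j => (hy' j).2.le⟩
    apply gf_vanish a b u hu hbc i
    · exact Fin.insertNth_mem_Icc.2 ⟨hcI, hyI⟩
    · rw [Fin.insertNth_apply_same]
      rcases hc with rfl | rfl
      · exact Or.inl rfl
      · exact Or.inr rfl
    · intro j hj
      obtain ⟨j', rfl⟩ := Fin.exists_succAbove_eq hj
      rw [Fin.insertNth_apply_succAbove]
      exact hy' j'
  have h1 : (∫ x in Set.univ.pi (fun i => Set.Ioo (a i) (b i)),
      ((∑ i : Fin 3, ∑ j : Fin 3, jac u x i j * jac u x j i)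
        - (∑ k : Fin 3, jac u x k k)^2))
      = ∫ x in Set.Icc a b,
      ((∑ i : Fin 3, ∑ j : Fin 3, jac u x i j * jac u x j i)
        - (∑ k : Fin 3, jac u x k k)^2) := by
    rw [MeasureTheory.volume_pi]
    exact MeasureTheory.setIntegral_congr_set MeasureTheory.Measure.univ_pi_Ioo_ae_eq_Icc
  rw [hdiveq] at key
  rw [h1, key, Finset.sum_eq_zero]
  intro i _
  rw [hface i (b i) (Or.inr rfl), hface i (a i) (Or.inl rfl), sub_zero]

end intzero

set_option maxHeartbeats 1000000 in
theorem stmt1 (a b : Fin 3 → ℝ) (hab : ∀ i, a i < b i)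
    (u : (Fin 3 → ℝ) → (Fin 3 → ℝ)) (hu : ContDiff ℝ 2 u)
    (hbc : ∀ i : Fin 3, ∀ x ∈ Set.univ.pi (fun j => Set.Icc (a j) (b j)),
      (x i = a i ∨ x i = b i) → u x i = 0) :
    (∫ x in Set.univ.pi (fun i => Set.Ioo (a i) (b i)),
        ∑ i : Fin 3, ∑ j : Fin 3, (jac u x i j) ^ 2)
      ≤ (∫ x in Set.univ.pi (fun i => Set.Ioo (a i) (b i)),
          ∑ i : Fin 3, ∑ j : Fin 3,
            (jac u x i j + jac u x j i
              - (2/3) * (∑ k : Fin 3, jac u x k k) * (if i = j then 1 else 0)) ^ 2) := by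
  set Ω : Set (Fin 3 → ℝ) := Set.univ.pi (fun i => Set.Ioo (a i) (b i)) with hΩ
  have hΩm : MeasurableSet Ω := MeasurableSet.univ_pi fun i => measurableSet_Ioo
  have hsub : Ω ⊆ Set.Icc a b := by
    rw [hΩ, ← Set.pi_univ_Icc]
    exact Set.pi_mono fun i _ => Set.Ioo_subset_Icc_self
  set L : (Fin 3 → ℝ) → ℝ := fun x => ∑ i : Fin 3, ∑ j : Fin 3, (jac u x i j) ^ 2 with hLdef
  set P : (Fin 3 → ℝ) → ℝ := fun x => L x + 2/3 * (∑ k : Fin 3, jac u x k k)^2 with hPdef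
  set Q : (Fin 3 → ℝ) → ℝ := fun x =>
    (∑ i : Fin 3, ∑ j : Fin 3, jac u x i j * jac u x j i)
      - (∑ k : Fin 3, jac u x k k)^2 with hQdef
  have hpt : ∀ x, (∑ i : Fin 3, ∑ j : Fin 3,
      (jac u x i j + jac u x j i
        - (2/3) * (∑ k : Fin 3, jac u x k k) * (if i = j then 1 else 0)) ^ 2)
      = L x + (P x + 2 * Q x) := by
    intro x
    have := algId (fun i j => jac u x i j)
    simp only [hLdef, hPdef, hQdef]
    linarith [this]
  have hLc : Continuous L := continuous_finset_sum _ fun i _ =>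
    continuous_finset_sum _ fun j _ => (cont_jac u hu i j).pow 2
  have hPc : Continuous P := hLc.add (continuous_const.mul
    ((continuous_finset_sum _ fun k _ => cont_jac u hu k k).pow 2))
  have hQc : Continuous Q :=
    ((continuous_finset_sum _ fun i _ => continuous_finset_sum _ fun j _ =>
      (cont_jac u hu i j).mul (cont_jac u hu j i)).sub
      ((continuous_finset_sum _ fun k _ => cont_jac u hu k k).pow 2))
  have hLi : IntegrableOn L Ω := (hLc.continuousOn.integrableOn_compact isCompact_Icc).mono_set hsub
  have hPi : IntegrableOn P Ω := (hPc.continuousOn.integrableOn_compact isCompact_Icc).mono_set hsub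
  have hQi : IntegrableOn Q Ω := (hQc.continuousOn.integrableOn_compact isCompact_Icc).mono_set hsub
  have hQ0 : (∫ x in Ω, Q x) = 0 := int_Q_zero a b hab u hu hbc
  have hPpos : 0 ≤ ∫ x in Ω, P x := by
    apply MeasureTheory.setIntegral_nonneg hΩm
    intro x _
    have h1 : 0 ≤ L x := by
      rw [hLdef]
      positivity
    have h2 : (0:ℝ) ≤ 2/3 * (∑ k : Fin 3, jac u x k k)^2 := by positivity
    rw [hPdef]
    dsimp only
    linarith
  have hsplit : (∫ x in Ω, ∑ i : Fin 3, ∑ j : Fin 3,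
      (jac u x i j + jac u x j i
        - (2/3) * (∑ k : Fin 3, jac u x k k) * (if i = j then 1 else 0)) ^ 2)
      = (∫ x in Ω, L x) + ((∫ x in Ω, P x) + 2 * ∫ x in Ω, Q x) := by
    have h2 : IntegrableOn (fun x => 2 * Q x) Ω := hQi.const_mul 2
    have h12 : IntegrableOn (fun x => P x + 2 * Q x) Ω := by
      exact hPi.add h2
    rw [show (fun x => ∑ i : Fin 3, ∑ j : Fin 3,
      (jac u x i j + jac u x j i
        - (2/3) * (∑ k : Fin 3, jac u x k k) * (if i = j then 1 else 0)) ^ 2)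
      = fun x => L x + (P x + 2 * Q x) from funext hpt]
    rw [MeasureTheory.integral_add hLi h12, MeasureTheory.integral_add hPi h2,
      MeasureTheory.integral_const_mul]
  rw [hsplit, hQ0]
  linarith
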